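/- Let C, A_1, …, A_m ∈ ℝ^{n×n} be symmetric matrices and b ∈ ℝ^m, and suppose the feasible set 𝒞 = {X ∈ ℝ^{n×n} : X symmetric, X ⪰ 0, tr(A_i X) = b_i for i = 1,…,m} is nonempty and compact. Then there exists a global minimizer X* of X ↦ tr(CX) over 𝒞 whose rank r = rank(X*) satisfies r(r+1) ≤ 2m. -/

import Mathlib

open Matrix

namespace SDPaux
variable {n m : ℕ}

noncomputable def B2 (s : Sym2 (Fin n)) : Matrix (Fin n) (Fin n) ℝ :=
  Sym2.lift ⟨fun i j => Matrix.single i j 1 + Matrix.single j i 1, fun _ _ => add_comm _ _⟩ s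

lemma B2_apply (a b i j : Fin n) :
    B2 s(a,b) i j = (if a = i ∧ b = j then (1:ℝ) else 0) + (if b = i ∧ a = j then 1 else 0) := by
  simp [B2, Matrix.single_apply, Matrix.add_apply]

lemma B2_isHermitian (s : Sym2 (Fin n)) : (B2 s).IsHermitian := by
  induction s using Sym2.ind with
  | _ a b =>
    ext i j
    rw [conjTranspose_apply, B2_apply, B2_apply, star_trivial]
    rw [add_comm]
    congr 1 <;> simp [and_comm]

lemma B2_eq_zero {s : Sym2 (Fin n)} {i j : Fin n} (h : i ∉ s) : B2 s i j = 0 := by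
  induction s using Sym2.ind with
  | _ a b =>
    simp only [Sym2.mem_iff, not_or] at h
    rw [B2_apply]
    simp [Ne.symm h.1, Ne.symm h.2]

lemma B2_apply_self (a b : Fin n) :
    B2 s(a,b) a b = if a = b then 2 else 1 := by
  rw [B2_apply]
  by_cases h : a = b <;> simp [h, eq_comm] <;> norm_num

lemma B2_apply_ne {s : Sym2 (Fin n)} {a b : Fin n} (h : s ≠ s(a,b)) : B2 s a b = 0 := by
  induction s using Sym2.ind with
  | _ x y =>
    rw [Ne, Sym2.eq_iff] at h
    push_neg at h
    rw [B2_apply, if_neg (fun hc => h.1 hc.1 hc.2), if_neg (fun hc => h.2 hc.2 hc.1), add_zero]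

end SDPaux

namespace SDPaux
variable {n m : ℕ}

lemma exists_direction (A : Fin m → Matrix (Fin n) (Fin n) ℝ) (t : Finset (Fin n))
    (hbig : 2 * m < t.card * (t.card + 1)) :
    ∃ W : Matrix (Fin n) (Fin n) ℝ, W ≠ 0 ∧ W.IsHermitian ∧
      (∀ i j : Fin n, i ∉ t → W i j = 0) ∧ (∀ k, (A k * W).trace = 0) := by
  classical
  set ι := {s // s ∈ t.sym2} with hι
  let L : (ι → ℝ) →ₗ[ℝ] Matrix (Fin n) (Fin n) ℝ :=
    { toFun := fun c => ∑ s : ι, c s • B2 (s : Sym2 (Fin n))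
      map_add' := by intro x y; simp [add_smul, Finset.sum_add_distrib]
      map_smul' := by intro r x; simp [smul_smul, Finset.smul_sum] }
  let Φ : Matrix (Fin n) (Fin n) ℝ →ₗ[ℝ] (Fin m → ℝ) :=
    { toFun := fun W k => (A k * W).trace
      map_add' := by intro x y; funext k; simp [Matrix.mul_add]
      map_smul' := by intro r x; funext k; simp [Matrix.mul_smul] }
  have hcard : m < Fintype.card ι := by
    have h1 : Fintype.card ι = (t.card + 1).choose 2 := by
      rw [Fintype.card_coe, Finset.card_sym2]
    have h2 : (t.card + 1).choose 2 * 2 = t.card * (t.card + 1) := by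
      rw [Nat.choose_two_right, Nat.add_sub_cancel, Nat.div_mul_cancel]
      · ring
      · simpa [mul_comm] using (Nat.even_mul_succ_self t.card).two_dvd
    omega
  have hni : ¬ Function.Injective (Φ.comp L) := by
    intro hinj
    have := LinearMap.finrank_le_finrank_of_injective hinj
    rw [Module.finrank_fintype_fun_eq_card, Module.finrank_fintype_fun_eq_card,
      Fintype.card_fin] at this
    omega
  obtain ⟨c1, c2, hc12, hne⟩ := Function.not_injective_iff.mp hni
  set c : ι → ℝ := c1 - c2 with hc
  have hΨ : Φ (L c) = 0 := by
    have : (Φ.comp L) c = 0 := by rw [map_sub, hc12, sub_self]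
    simpa using this
  have hc0 : c ≠ 0 := sub_ne_zero.mpr hne
  set W : Matrix (Fin n) (Fin n) ℝ := L c with hW
  have hentry : ∀ (s : ι) (a b : Fin n), (s : Sym2 (Fin n)) = s(a,b) →
      W a b = c s * (if a = b then 2 else 1) := by
    intro s a b hs
    have : W a b = ∑ s' : ι, c s' * B2 (s' : Sym2 (Fin n)) a b := by
      simp [hW, L, Matrix.sum_apply]
    rw [this, Finset.sum_eq_single s]
    · rw [hs, B2_apply_self]
    · intro s' _ hss
      rw [B2_apply_ne (by rw [← hs]; exact fun h => hss (Subtype.ext h)), mul_zero]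
    · intro h; exact absurd (Finset.mem_univ s) h
  refine ⟨W, ?_, ?_, ?_, ?_⟩
  · intro hW0
    obtain ⟨s, hs⟩ : ∃ s : ι, c s ≠ 0 := by
      by_contra h; push_neg at h; exact hc0 (funext fun s => h s)
    obtain ⟨⟨a, b⟩, hab⟩ := Quot.exists_rep (s : Sym2 (Fin n))
    have := hentry s a b hab.symm
    rw [hW0] at this
    simp only [Matrix.zero_apply] at this
    by_cases h : a = b <;> simp [h] at this <;> simp_all
  · show Wᴴ = W
    simp only [hW, L, LinearMap.coe_mk, AddHom.coe_mk]
    rw [conjTranspose_sum]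
    refine Finset.sum_congr rfl fun s _ => ?_
    rw [conjTranspose_smul, star_trivial, (B2_isHermitian _).eq]
  · intro i j hi
    have : W i j = ∑ s' : ι, c s' * B2 (s' : Sym2 (Fin n)) i j := by
      simp [hW, L, Matrix.sum_apply]
    rw [this, Finset.sum_eq_zero]
    intro s' _
    rw [B2_eq_zero (fun hmem => hi (Finset.mem_sym2_iff.mp s'.2 i hmem)), mul_zero]
  · intro k
    exact congr_fun hΨ k

end SDPaux

namespace SDPaux

lemma eq_zero_of_posSemidef_neg {n : ℕ} {W : Matrix (Fin n) (Fin n) ℝ}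
    (h1 : W.PosSemidef) (h2 : (-W).PosSemidef) : W = 0 := by
  have hH := h1.1
  have heig : hH.eigenvalues = 0 := by
    funext i
    have ha := h1.eigenvalues_nonneg i
    have hb := h2.dotProduct_mulVec_nonneg ⇑(hH.eigenvectorBasis i)
    rw [neg_mulVec, dotProduct_neg] at hb
    have hc := hH.eigenvalues_eq i
    simp only [RCLike.re_to_real] at hc
    rw [star_trivial] at hc hb
    have hle : hH.eigenvalues i ≤ 0 := by rw [hc]; linarith
    show hH.eigenvalues i = (0 : Fin n → ℝ) i
    rw [Pi.zero_apply]
    linarith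
  have hsp := hH.spectral_theorem
  rw [heig] at hsp
  have h0 : diagonal (RCLike.ofReal ∘ (0 : Fin n → ℝ)) = (0 : Matrix (Fin n) (Fin n) ℝ) := by
    ext i j; simp [diagonal]
  rw [Unitary.conjStarAlgAut_apply, h0, Matrix.mul_zero, Matrix.zero_mul] at hsp
  exact hsp

end SDPaux

namespace SDPaux

lemma rank_reduce_diag {n m : ℕ} (C : Matrix (Fin n) (Fin n) ℝ)
    (A : Fin m → Matrix (Fin n) (Fin n) ℝ) (b : Fin m → ℝ) (d : Fin n → ℝ)
    (hd : ∀ i, 0 ≤ d i)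
    (hfeas : ∀ k, (A k * diagonal d).trace = b k)
    (hmin : ∀ Y : Matrix (Fin n) (Fin n) ℝ, Y.PosSemidef → (∀ k, (A k * Y).trace = b k) →
      (C * diagonal d).trace ≤ (C * Y).trace)
    (hbig : 2 * m < (diagonal d).rank * ((diagonal d).rank + 1)) :
    ∃ X' : Matrix (Fin n) (Fin n) ℝ, X'.PosSemidef ∧ (∀ k, (A k * X').trace = b k) ∧
      (C * X').trace ≤ (C * diagonal d).trace ∧ X'.rank < (diagonal d).rank := by
  classical
  set t : Finset (Fin n) := Finset.univ.filter (fun i => d i ≠ 0) with ht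
  have hrankd : (diagonal d).rank = t.card := by
    rw [Matrix.rank_diagonal, Fintype.card_subtype]
  rw [hrankd] at hbig ⊢
  obtain ⟨W, hW0, hWH, hWrow, hWtr⟩ := exists_direction A t hbig
  have hWrow' : ∀ i j, d i = 0 → W i j = 0 := fun i j h =>
    hWrow i j (by simp [ht, h])
  clear hWrow
  suffices H : ∀ W : Matrix (Fin n) (Fin n) ℝ, W.IsHermitian →
      (∀ i j, d i = 0 → W i j = 0) → (∀ k, (A k * W).trace = 0) → ¬ W.PosSemidef →
      ∃ X' : Matrix (Fin n) (Fin n) ℝ, X'.PosSemidef ∧ (∀ k, (A k * X').trace = b k) ∧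
        (C * X').trace ≤ (C * diagonal d).trace ∧ X'.rank < t.card by
    have hor : ¬ W.PosSemidef ∨ ¬ (-W).PosSemidef := by
      by_contra hcon
      rw [not_or, not_not, not_not] at hcon
      exact hW0 (eq_zero_of_posSemidef_neg hcon.1 hcon.2)
    rcases hor with h | h
    · exact H W hWH hWrow' hWtr h
    · refine H (-W) ?_ (fun i j hd0 => by simp [hWrow' i j hd0])
        (fun k => by rw [Matrix.mul_neg, trace_neg, hWtr k, neg_zero]) h
      show (-W)ᴴ = -W
      rw [conjTranspose_neg, hWH.eq]
  clear hW0 hWH hWrow' hWtr W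
  intro W hWH hWrow hWtr hWnpsd
  have hWcol : ∀ i j, d j = 0 → W i j = 0 := by
    intro i j h
    rw [← hWH.eq, conjTranspose_apply, star_trivial, hWrow j i h]
  set p : Fin n → ℝ := fun i => Real.sqrt (d i) with hp
  set q : Fin n → ℝ := fun i => (Real.sqrt (d i))⁻¹ with hq
  have hpq : ∀ i, d i ≠ 0 → p i * q i = 1 := fun i h =>
    mul_inv_cancel₀ (Real.sqrt_ne_zero'.mpr (lt_of_le_of_ne (hd i) (Ne.symm h)))
  have hp0 : ∀ i, d i = 0 → p i = 0 := fun i h => by simp [hp, h]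
  have hq0 : ∀ i, d i = 0 → q i = 0 := fun i h => by simp [hq, h]
  have hpp : ∀ i, p i * p i = d i := fun i => Real.mul_self_sqrt (hd i)
  set M : Matrix (Fin n) (Fin n) ℝ := diagonal q * W * diagonal q with hM
  have hMapp : ∀ i j, M i j = q i * W i j * q j := by
    intro i j
    rw [hM, Matrix.mul_diagonal, Matrix.diagonal_mul]
  have hqH : (diagonal q).IsHermitian := isHermitian_diagonal q
  have hpH : (diagonal p).IsHermitian := isHermitian_diagonal p
  have hMH : M.IsHermitian := by
    show Mᴴ = M
    rw [hM, conjTranspose_mul, conjTranspose_mul, hqH.eq, hWH.eq, mul_assoc]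
  have hMsupp : ∀ i j, d i = 0 → M i j = 0 := fun i j h => by
    rw [hMapp, hq0 i h, zero_mul, zero_mul]
  have hPMP : diagonal p * M * diagonal p = W := by
    ext i j
    rw [Matrix.mul_diagonal, Matrix.diagonal_mul, hMapp]
    by_cases hi : d i = 0
    · rw [hp0 i hi, hWrow i j hi]; ring
    · by_cases hj : d j = 0
      · rw [hp0 j hj, hWcol i j hj]; ring
      · rw [show p i * (q i * W i j * q j) * p j = p i * q i * (p j * q j) * W i j from by
          ring, hpq i hi, hpq j hj]; ring
  have hdecomp : ∀ s : ℝ, diagonal d + s • W = diagonal p * (1 + s • M) * diagonal p := by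
    intro s
    rw [Matrix.mul_add, Matrix.mul_one, Matrix.add_mul, Matrix.mul_smul, Matrix.smul_mul,
      hPMP, diagonal_mul_diagonal]
    congr 1
    rw [show (fun i => p i * p i) = d from funext hpp]
  set μ : Fin n → ℝ := hMH.eigenvalues with hμ
  have hpsd : ∀ s : ℝ, (∀ i, 0 ≤ 1 + s * μ i) → (diagonal d + s • W).PosSemidef := by
    intro s hs
    rw [hdecomp s]
    have h1 : (1 + s • M).PosSemidef := by
      set V : Matrix (Fin n) (Fin n) ℝ := (hMH.eigenvectorUnitary : Matrix (Fin n) (Fin n) ℝ)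
        with hV
    
      have hVV : V * Vᴴ = 1 := by
        rw [← Matrix.star_eq_conjTranspose]
        exact (Matrix.mem_unitaryGroup_iff).mp (hMH.eigenvectorUnitary).2
      have hdiag : diagonal (RCLike.ofReal ∘ μ) = diagonal μ := by
        congr 1
      have hspec : M = V * diagonal μ * Vᴴ := by
        rw [hV, ← hdiag, ← Matrix.star_eq_conjTranspose]
        exact hMH.spectral_theorem
      have hdsum : diagonal (fun i => 1 + s * μ i) = (1 : Matrix (Fin n) (Fin n) ℝ)
          + s • diagonal μ := by
        ext i j
        rcases eq_or_ne i j with h | h <;>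
          simp [Matrix.diagonal_apply, Matrix.one_apply, h]
      have hkey : 1 + s • M = V * diagonal (fun i => 1 + s * μ i) * Vᴴ := by
        rw [hdsum, Matrix.mul_add, Matrix.mul_one, Matrix.add_mul, Matrix.mul_smul,
          Matrix.smul_mul, hVV, ← hspec]
      rw [hkey]
      exact (posSemidef_diagonal_iff.mpr hs).mul_mul_conjTranspose_same V
    have h2 := h1.mul_mul_conjTranspose_same (diagonal p)
    rwa [hpH.eq] at h2
  have haffine : ∀ (E : Matrix (Fin n) (Fin n) ℝ) (s : ℝ),
      (E * (diagonal d + s • W)).trace = (E * diagonal d).trace + s * (E * W).trace := by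
    intro E s
    rw [Matrix.mul_add, trace_add, Matrix.mul_smul, trace_smul, smul_eq_mul]
  have hfeas' : ∀ (s : ℝ) k, (A k * (diagonal d + s • W)).trace = b k := fun s k => by
    rw [haffine, hWtr k, mul_zero, add_zero, hfeas k]
  -- the slope must vanish
  set K : ℝ := ∑ i, |μ i| with hK
  have hK0 : 0 ≤ K := Finset.sum_nonneg fun i _ => abs_nonneg _
  set ε : ℝ := (K + 1)⁻¹ with hε
  have hεpos : 0 < ε := by rw [hε]; positivity
  have habs : ∀ i, |μ i| ≤ K := fun i =>
    Finset.single_le_sum (f := fun j => |μ j|) (fun j _ => abs_nonneg _) (Finset.mem_univ i)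
  have hbound : ∀ σ : ℝ, |σ| ≤ ε → ∀ i, 0 ≤ 1 + σ * μ i := by
    intro σ hσ i
    have h1 : |σ * μ i| ≤ ε * K := by
      rw [abs_mul]
      exact mul_le_mul hσ (habs i) (abs_nonneg _) hεpos.le
    have h3 : ε * (K + 1) = 1 := inv_mul_cancel₀ (by linarith)
    have h4 := neg_abs_le (σ * μ i)
    nlinarith
  have hslope : (C * W).trace = 0 := by
    have hplus := hmin _ (hpsd ε (hbound ε (by rw [abs_of_pos hεpos]))) (hfeas' ε)
    have hminus := hmin _ (hpsd (-ε) (hbound (-ε) (by rw [abs_neg, abs_of_pos hεpos])))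
      (hfeas' (-ε))
    rw [haffine] at hplus hminus
    nlinarith
  -- negative eigenvalue exists
  have htne : t.Nonempty := by
    rw [← Finset.card_pos]
    rcases Nat.eq_zero_or_pos t.card with h | h
    · rw [h] at hbig; omega
    · exact h
  have hnfin : Nonempty (Fin n) := ⟨htne.choose⟩
  obtain ⟨i₀, -, hi₀⟩ := Finset.exists_min_image Finset.univ μ Finset.univ_nonempty
  have hMnpsd : ¬ M.PosSemidef := by
    intro h
    have := h.mul_mul_conjTranspose_same (diagonal p)
    rw [hpH.eq, hPMP] at this
    exact hWnpsd this
  have hneg : μ i₀ < 0 := by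
    by_contra h
    push_neg at h
    exact hMnpsd (hMH.posSemidef_iff_eigenvalues_nonneg.mpr
      (fun i => le_trans h (hi₀ i (Finset.mem_univ i))))
  set s' : ℝ := -(μ i₀)⁻¹ with hs'
  have hs'pos : 0 < s' := by
    rw [hs']
    have := inv_lt_zero.mpr hneg
    linarith
  have hν : ∀ i, 0 ≤ 1 + s' * μ i := by
    intro i
    have h1 : μ i₀ ≤ μ i := hi₀ i (Finset.mem_univ i)
    have h2 : μ i₀ * (μ i₀)⁻¹ = 1 := mul_inv_cancel₀ (ne_of_lt hneg)
    rw [hs']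
    nlinarith
  refine ⟨diagonal d + s' • W, hpsd s' hν, hfeas' s', ?_, ?_⟩
  · rw [haffine, hslope, mul_zero, add_zero]
  · -- rank drops
    set X' : Matrix (Fin n) (Fin n) ℝ := diagonal d + s' • W with hX'
    set v : Fin n → ℝ := ⇑(hMH.eigenvectorBasis i₀) with hv
    have hMv : M *ᵥ v = μ i₀ • v := hMH.mulVec_eigenvectorBasis i₀
    have hvsupp : ∀ i, d i = 0 → v i = 0 := by
      intro i h
      have h1 : (M *ᵥ v) i = 0 := by
        simp only [mulVec, dotProduct]
        exact Finset.sum_eq_zero fun j _ => by rw [hMsupp i j h, zero_mul]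
      rw [hMv] at h1
      simp only [Pi.smul_apply, smul_eq_mul] at h1
      rcases mul_eq_zero.mp h1 with h2 | h2
      · exact absurd h2 (ne_of_lt hneg)
      · exact h2
    have hvne : ∃ i, v i ≠ 0 := by
      by_contra h
      push_neg at h
      have hnorm : ‖hMH.eigenvectorBasis i₀‖ = 1 := hMH.eigenvectorBasis.orthonormal.1 i₀
      have h0 : ‖hMH.eigenvectorBasis i₀‖ = 0 := by
        rw [EuclideanSpace.norm_eq]
        have : ∀ i, ‖hMH.eigenvectorBasis i₀ i‖ = 0 := fun i => by
          rw [show hMH.eigenvectorBasis i₀ i = v i from rfl, h i, norm_zero]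
        simp [this]
      rw [h0] at hnorm
      norm_num at hnorm
    obtain ⟨i₁, hi₁⟩ := hvne
    have hdi₁ : d i₁ ≠ 0 := fun h => hi₁ (hvsupp i₁ h)
    have hqi₁ : q i₁ ≠ 0 := by
      rw [hq]
      simp only [ne_eq, inv_eq_zero]
      exact fun h => hdi₁ (by
        have := Real.sqrt_eq_zero (hd i₁) |>.mp h
        exact this)
    set z : Fin n → ℝ := fun i => q i * v i with hz
    have hPz : diagonal p *ᵥ z = v := by
      funext i
      rw [Matrix.mulVec_diagonal]
      rcases eq_or_ne (d i) 0 with h | h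
      · rw [hvsupp i h, hz]; simp [hvsupp i h]
      · rw [hz]
        show p i * (q i * v i) = v i
        rw [← mul_assoc, hpq i h, one_mul]
    have hNv : (1 + s' • M) *ᵥ v = 0 := by
      rw [add_mulVec, one_mulVec, smul_mulVec, hMv, smul_smul]
      have : s' * μ i₀ = -1 := by
        rw [hs', neg_mul, inv_mul_cancel₀ (ne_of_lt hneg)]
      rw [this]
      funext i
      simp
    have hXz : X' *ᵥ z = 0 := by
      rw [hX', hdecomp s', ← mulVec_mulVec, ← mulVec_mulVec, hPz, hNv, mulVec_zero]
    have hzne : z ≠ 0 := by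
      intro h
      have := congr_fun h i₁
      simp only [hz, Pi.zero_apply] at this
      exact hi₁ ((mul_eq_zero.mp this).resolve_left hqi₁)
    have hzsupp : ∀ i, d i ≠ 0 ∨ z i = 0 := by
      intro i
      rcases eq_or_ne (d i) 0 with h | h
      · right; rw [hz]; show q i * v i = 0; rw [hq0 i h, zero_mul]
      · left; exact h
    have hcol : ∀ j, d j = 0 → X' *ᵥ Pi.single j 1 = 0 := by
      intro j hj
      rw [mulVec_single]
      funext i
      rw [MulOpposite.op_one, one_smul]
      show X' i j = 0
      rw [hX']
      simp only [Matrix.add_apply, Matrix.smul_apply, smul_eq_mul]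
      rw [hWcol i j hj, Matrix.diagonal_apply]
      rcases eq_or_ne i j with h | h
      · rw [if_pos h, h, hj]; ring
      · rw [if_neg h]; ring
    -- dimension counting
    set f : {j : Fin n // d j = 0} → (Fin n → ℝ) := fun j => Pi.single j.1 1 with hf
    have hfli : LinearIndependent ℝ f := by
      have h1 := (Pi.basisFun ℝ (Fin n)).linearIndependent
      have h2 := h1.comp Subtype.val (Subtype.val_injective (p := fun j => d j = 0))
      have : f = (⇑(Pi.basisFun ℝ (Fin n))) ∘ Subtype.val := by
        funext j
        rw [hf, Function.comp_apply, Pi.basisFun_apply]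
      rwa [this]
    set Ks : Submodule ℝ (Fin n → ℝ) := Submodule.span ℝ (Set.range f) with hKs
    set ker := LinearMap.ker X'.mulVecLin with hker
    have hKk : Ks ≤ ker := by
      rw [hKs, Submodule.span_le]
      rintro x ⟨j, rfl⟩
      rw [SetLike.mem_coe, LinearMap.mem_ker, Matrix.mulVecLin_apply]
      exact hcol j.1 j.2
    have hzker : z ∈ ker := by
      rw [hker, LinearMap.mem_ker, Matrix.mulVecLin_apply]
      exact hXz
    have hzK : z ∉ Ks := by
      intro hzin
      have hvanish : ∀ u ∈ Ks, u i₁ = 0 := by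
        intro u hu
        rw [hKs] at hu
        induction hu using Submodule.span_induction with
        | mem x hx =>
          obtain ⟨j, rfl⟩ := hx
          rw [hf]
          exact Pi.single_eq_of_ne (fun h : i₁ = j.1 => hdi₁ (h ▸ j.2)) 1
        | zero => rfl
        | add x y hx hy ihx ihy => rw [Pi.add_apply, ihx, ihy, add_zero]
        | smul a x hx ihx => rw [Pi.smul_apply, ihx, smul_zero]
      have h1 := hvanish z hzin
      simp only [hz] at h1
      exact hi₁ ((mul_eq_zero.mp h1).resolve_left hqi₁)
    have hlt : Ks < ker := lt_of_le_of_ne hKk (fun h => hzK (h ▸ hzker))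
    have hdim1 : Module.finrank ℝ Ks = Fintype.card {j : Fin n // d j = 0} := by
      rw [hKs]
      exact finrank_span_eq_card hfli
    have hdim2 : Module.finrank ℝ Ks < Module.finrank ℝ ker :=
      Submodule.finrank_lt_finrank_of_lt hlt
    have hrn : X'.rank + Module.finrank ℝ ker = n := by
      rw [Matrix.rank]
      have h1 := LinearMap.finrank_range_add_finrank_ker X'.mulVecLin
      rw [Module.finrank_fintype_fun_eq_card, Fintype.card_fin] at h1
      exact h1
    have hcards : Fintype.card {j : Fin n // d j = 0} + t.card = n := by
      rw [Fintype.card_subtype, ht]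
      have h1 := Finset.card_filter_add_card_filter_not
        (s := (Finset.univ : Finset (Fin n))) (p := fun j => d j = 0)
      simp only [Finset.card_univ, Fintype.card_fin] at h1
      have h2 : Finset.filter (fun j => ¬ d j = 0) (Finset.univ : Finset (Fin n))
          = Finset.filter (fun i => d i ≠ 0) Finset.univ := rfl
      rw [← h2]
      exact h1
    omega


end SDPaux

namespace SDPaux

lemma rank_reduce {n m : ℕ} (C : Matrix (Fin n) (Fin n) ℝ)
    (A : Fin m → Matrix (Fin n) (Fin n) ℝ) (b : Fin m → ℝ)
    (X : Matrix (Fin n) (Fin n) ℝ) (hX : X.PosSemidef)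
    (hfeas : ∀ k, (A k * X).trace = b k)
    (hmin : ∀ Y : Matrix (Fin n) (Fin n) ℝ, Y.PosSemidef → (∀ k, (A k * Y).trace = b k) →
      (C * X).trace ≤ (C * Y).trace)
    (hbig : 2 * m < X.rank * (X.rank + 1)) :
    ∃ X' : Matrix (Fin n) (Fin n) ℝ, X'.PosSemidef ∧ (∀ k, (A k * X').trace = b k) ∧
      (C * X').trace ≤ (C * X).trace ∧ X'.rank < X.rank := by
  classical
  have hH := hX.1
  set U : Matrix (Fin n) (Fin n) ℝ := (hH.eigenvectorUnitary : Matrix (Fin n) (Fin n) ℝ)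
    with hU
  set d : Fin n → ℝ := hH.eigenvalues with hd'
  have hd : ∀ i, 0 ≤ d i := fun i => hX.eigenvalues_nonneg i
  have hU1 : U * Uᴴ = 1 := by
    rw [← Matrix.star_eq_conjTranspose]
    exact (Matrix.mem_unitaryGroup_iff).mp (hH.eigenvectorUnitary).2
  have hU2 : Uᴴ * U = 1 := by
    rw [← Matrix.star_eq_conjTranspose]
    exact (Matrix.mem_unitaryGroup_iff').mp (hH.eigenvectorUnitary).2
  have hdiag : diagonal (RCLike.ofReal ∘ d) = diagonal d := by congr 1
  have hspec : X = U * diagonal d * Uᴴ := by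
    rw [hU, ← hdiag, ← Matrix.star_eq_conjTranspose]
    exact hH.spectral_theorem
  have htradj : ∀ E Y : Matrix (Fin n) (Fin n) ℝ,
      ((Uᴴ * E * U) * Y).trace = (E * (U * Y * Uᴴ)).trace := by
    intro E Y
    rw [show Uᴴ * E * U * Y = Uᴴ * (E * (U * Y)) from by noncomm_ring,
      Matrix.trace_mul_comm, show E * (U * Y) * Uᴴ = E * (U * Y * Uᴴ) from by noncomm_ring]
  have hdetU : IsUnit U.det := by
    apply IsUnit.of_mul_eq_one (Uᴴ.det)
    rw [← Matrix.det_mul, hU1, Matrix.det_one]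
  have hdetUH : IsUnit Uᴴ.det := by
    apply IsUnit.of_mul_eq_one (U.det)
    rw [← Matrix.det_mul, hU2, Matrix.det_one]
  have hrkadj : ∀ Z : Matrix (Fin n) (Fin n) ℝ, (U * Z * Uᴴ).rank = Z.rank := by
    intro Z
    rw [Matrix.rank_mul_eq_left_of_isUnit_det Uᴴ (U * Z) hdetUH,
      Matrix.rank_mul_eq_right_of_isUnit_det U Z hdetU]
  set A' : Fin m → Matrix (Fin n) (Fin n) ℝ := fun k => Uᴴ * A k * U with hA'
  set C' : Matrix (Fin n) (Fin n) ℝ := Uᴴ * C * U with hC'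
  have hCX : (C' * diagonal d).trace = (C * X).trace := by
    rw [hC', htradj, ← hspec]
  have hfeas2 : ∀ k, (A' k * diagonal d).trace = b k := fun k => by
    rw [hA', htradj, ← hspec, hfeas k]
  have hmin2 : ∀ Y : Matrix (Fin n) (Fin n) ℝ, Y.PosSemidef →
      (∀ k, (A' k * Y).trace = b k) → (C' * diagonal d).trace ≤ (C' * Y).trace := by
    intro Y hY hYf
    rw [hCX, hC', htradj]
    exact hmin (U * Y * Uᴴ) (hY.mul_mul_conjTranspose_same U)
      (fun k => by rw [← htradj]; exact hYf k)
  have hbig2 : 2 * m < (diagonal d).rank * ((diagonal d).rank + 1) := by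
    rw [hd', ← hH.rank_eq_rank_diagonal]
    exact hbig
  obtain ⟨X'', h1, h2, h3, h4⟩ := rank_reduce_diag C' A' b d hd hfeas2 hmin2 hbig2
  refine ⟨U * X'' * Uᴴ, h1.mul_mul_conjTranspose_same U, fun k => by rw [← htradj]; exact h2 k,
    ?_, ?_⟩
  · rw [← htradj]
    exact le_trans h3 (le_of_eq hCX)
  · rw [hrkadj, hd'] at *
    rw [← hH.rank_eq_rank_diagonal] at h4
    exact h4

end SDPaux

/-- If the feasible set of an SDP is nonempty and compact, there exists a global
minimizer `X*` of `tr(C X)` whose rank `r` satisfies `r(r+1) ≤ 2m`. -/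
theorem exists_low_rank_sdp_minimizer {n m : ℕ}
    (C : Matrix (Fin n) (Fin n) ℝ) (hC : C.IsSymm)
    (A : Fin m → Matrix (Fin n) (Fin n) ℝ) (hA : ∀ i, (A i).IsSymm)
    (b : Fin m → ℝ)
    (S : Set (Matrix (Fin n) (Fin n) ℝ))
    (hS : S = {X | X.PosSemidef ∧ ∀ i, (A i * X).trace = b i})
    (hne : S.Nonempty) (hcomp : IsCompact S) :
    ∃ Xstar ∈ S, (∀ X ∈ S, (C * Xstar).trace ≤ (C * X).trace) ∧
      Xstar.rank * (Xstar.rank + 1) ≤ 2 * m := by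
  have hcont : Continuous fun X : Matrix (Fin n) (Fin n) ℝ => (C * X).trace :=
    (continuous_const.matrix_mul continuous_id).matrix_trace
  obtain ⟨X₀, hX₀S, hmin₀⟩ := hcomp.exists_isMinOn hne hcont.continuousOn
  have hmin₀' : ∀ Y ∈ S, (C * X₀).trace ≤ (C * Y).trace := fun Y hY =>
    isMinOn_iff.mp hmin₀ Y hY
  have main : ∀ (k : ℕ) (X : Matrix (Fin n) (Fin n) ℝ), X ∈ S →
      (∀ Y ∈ S, (C * X).trace ≤ (C * Y).trace) → X.rank ≤ k →
      ∃ Xstar ∈ S, (∀ Y ∈ S, (C * Xstar).trace ≤ (C * Y).trace) ∧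
        Xstar.rank * (Xstar.rank + 1) ≤ 2 * m := by
    intro k
    induction k with
    | zero =>
      intro X hXS hXmin hrk
      have h0 : X.rank = 0 := Nat.le_zero.mp hrk
      exact ⟨X, hXS, hXmin, by rw [h0]; omega⟩
    | succ k ih =>
      intro X hXS hXmin hrk
      by_cases hle : X.rank * (X.rank + 1) ≤ 2 * m
      · exact ⟨X, hXS, hXmin, hle⟩
      · push_neg at hle
        have hXS' := hXS
        rw [hS] at hXS'
        obtain ⟨hpsd, hfeas⟩ := hXS'
        obtain ⟨X', h1, h2, h3, h4⟩ := SDPaux.rank_reduce C A b X hpsd hfeas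
          (fun Y hY hYf => hXmin Y (by rw [hS]; exact ⟨hY, hYf⟩)) hle
        have hX'S : X' ∈ S := by rw [hS]; exact ⟨h1, h2⟩
        exact ih X' hX'S (fun Y hYS => le_trans h3 (hXmin Y hYS)) (by omega)
  exact main X₀.rank X₀ hX₀S hmin₀' le_rfl
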